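/- (Optimal predictor theorem, pointwise form.) The reward-contrasted loss F has a unique global minimizer at v* = μ° + (2/β) Δ: for every v ∈ ℝ^d one has F(v*) ≤ F(v), with equality if and only if v = v*. -/

import Mathlib

open MeasureTheory

local notation "⟪" x ", " y "⟫" => @inner ℝ _ _ x y

lemma aux_int_id {d : ℕ} (p : Measure (EuclideanSpace ℝ (Fin d))) [IsProbabilityMeasure p]
    (h2 : Integrable (fun x => ‖x‖ ^ 2) p) : Integrable (fun x => x) p := by
  refine Integrable.mono' (g := fun x : EuclideanSpace ℝ (Fin d) => 1 + ‖x‖ ^ 2)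
    ((integrable_const 1).add h2) measurable_id.aestronglyMeasurable ?_
  refine Filter.Eventually.of_forall fun x => ?_
  show ‖x‖ ≤ 1 + ‖x‖ ^ 2
  nlinarith [sq_nonneg (‖x‖ - 1)]

lemma aux_expand {d : ℕ} (p : Measure (EuclideanSpace ℝ (Fin d))) [IsProbabilityMeasure p]
    (h2 : Integrable (fun x => ‖x‖ ^ 2) p) (c : EuclideanSpace ℝ (Fin d)) :
    ∫ x, ‖c - x‖ ^ 2 ∂p = ‖c‖ ^ 2 - 2 * ⟪c, ∫ x, x ∂p⟫ + ∫ x, ‖x‖ ^ 2 ∂p := by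
  have hid := aux_int_id p h2
  have hmul : Integrable (fun x : EuclideanSpace ℝ (Fin d) => 2 * ⟪c, x⟫) p :=
    (hid.const_inner c).const_mul 2
  have hsub : Integrable (fun x : EuclideanSpace ℝ (Fin d) => ‖c‖ ^ 2 - 2 * ⟪c, x⟫) p :=
    (integrable_const _).sub hmul
  have h1 : (fun x : EuclideanSpace ℝ (Fin d) => ‖c - x‖ ^ 2)
      = fun x => (‖c‖ ^ 2 - 2 * ⟪c, x⟫) + ‖x‖ ^ 2 := by
    funext x; rw [norm_sub_sq_real]
  rw [h1, integral_add hsub h2, integral_sub (integrable_const _) hmul,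
    integral_const, integral_const_mul, integral_inner hid, probReal_univ]
  simp

lemma aux_key {d : ℕ} (A B s μp μm : EuclideanSpace ℝ (Fin d)) (α : ℝ) :
    α * (‖A + s‖ ^ 2 - 2 * ⟪A + s, μp⟫) + (1 - α) * (‖B - s‖ ^ 2 - 2 * ⟪B - s, μm⟫)
      = α * (‖A‖ ^ 2 - 2 * ⟪A, μp⟫) + (1 - α) * (‖B‖ ^ 2 - 2 * ⟪B, μm⟫) + ‖s‖ ^ 2
        + 2 * ⟪α • A - (1 - α) • B - α • μp + (1 - α) • μm, s⟫ := by
  simp only [norm_add_sq_real, norm_sub_sq_real, inner_add_left, inner_sub_left,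
    real_inner_smul_left]
  linear_combination (2 * α) * real_inner_comm s μp - (2 * (1 - α)) * real_inner_comm s μm

/-- **Optimal predictor theorem, pointwise form.** The reward-contrasted
loss `F` has a unique global minimizer at `v* = μ° + (2/β) Δ`: for every `v ∈ ℝ^d` one has
`F(v*) ≤ F(v)`, with equality if and only if `v = v*`. -/
theorem optimal_predictor
    (d : ℕ) (hd : 1 ≤ d)
    (pplus pminus : Measure (EuclideanSpace ℝ (Fin d)))
    [IsProbabilityMeasure pplus] [IsProbabilityMeasure pminus]
    (h2plus : Integrable (fun x => ‖x‖ ^ 2) pplus)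
    (h2minus : Integrable (fun x => ‖x‖ ^ 2) pminus)
    (μplus μminus : EuclideanSpace ℝ (Fin d))
    (hμplus : μplus = ∫ x, x ∂pplus)
    (hμminus : μminus = ∫ x, x ∂pminus)
    (α β : ℝ) (hα0 : 0 < α) (hα1 : α < 1) (hβ : 0 < β)
    (μmid Δ : EuclideanSpace ℝ (Fin d))
    (hμmid : μmid = α • μplus + (1 - α) • μminus)
    (hΔ : Δ = α • (μplus - μmid))
    (F : EuclideanSpace ℝ (Fin d) → ℝ)
    (hF : ∀ v, F v =
      α * ∫ x, ‖(1 - β) • μmid + β • v - x‖ ^ 2 ∂pplus +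
      (1 - α) * ∫ x, ‖(1 + β) • μmid - β • v - x‖ ^ 2 ∂pminus)
    (vstar : EuclideanSpace ℝ (Fin d))
    (hvstar : vstar = μmid + (2 / β) • Δ) :
    ∀ v, F vstar ≤ F v ∧ (F v = F vstar ↔ v = vstar) := by
  intro v
  set a : EuclideanSpace ℝ (Fin d) → EuclideanSpace ℝ (Fin d) :=
    fun u => (1 - β) • μmid + β • u with ha_def
  set b : EuclideanSpace ℝ (Fin d) → EuclideanSpace ℝ (Fin d) :=
    fun u => (1 + β) • μmid - β • u with hb_def
  have hFv : ∀ u, F u = (α * (‖a u‖ ^ 2 - 2 * ⟪a u, μplus⟫)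
      + (1 - α) * (‖b u‖ ^ 2 - 2 * ⟪b u, μminus⟫))
      + (α * ∫ x, ‖x‖ ^ 2 ∂pplus + (1 - α) * ∫ x, ‖x‖ ^ 2 ∂pminus) := by
    intro u
    rw [hF u, aux_expand pplus h2plus, aux_expand pminus h2minus, ← hμplus, ← hμminus]
    ring
  have ha : a v = a vstar + β • (v - vstar) := by
    simp only [ha_def]; module
  have hb : b v = b vstar - β • (v - vstar) := by
    simp only [hb_def]; module
  have hz : α • a vstar - (1 - α) • b vstar - α • μplus + (1 - α) • μminus
      = (0 : EuclideanSpace ℝ (Fin d)) := by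
    simp only [ha_def, hb_def, hvstar, hΔ, hμmid]
    match_scalars <;> field_simp <;> ring
  have hnorm : ‖β • (v - vstar)‖ ^ 2 = β ^ 2 * ‖v - vstar‖ ^ 2 := by
    rw [norm_smul, Real.norm_eq_abs, mul_pow, sq_abs]
  have hdiff : F v = F vstar + β ^ 2 * ‖v - vstar‖ ^ 2 := by
    rw [hFv v, hFv vstar, ha, hb,
      aux_key (a vstar) (b vstar) (β • (v - vstar)) μplus μminus α, hz, hnorm]
    simp only [inner_zero_left]
    ring
  have hβ2 : (0 : ℝ) < β ^ 2 := by positivity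
  have hn0 : (0 : ℝ) ≤ β ^ 2 * ‖v - vstar‖ ^ 2 := by positivity
  refine ⟨by linarith, ?_, fun h => by rw [h]⟩
  intro h
  have h0 : β ^ 2 * ‖v - vstar‖ ^ 2 = 0 := by linarith
  have hsq : ‖v - vstar‖ ^ 2 = 0 := (mul_eq_zero.1 h0).resolve_left hβ2.ne'
  have : ‖v - vstar‖ = 0 := by
    have h := pow_eq_zero_iff (n := 2) (by norm_num) |>.1 hsq
    exact h
  exact sub_eq_zero.1 (norm_eq_zero.1 this)
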